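/- Let A be a set of gambles on X^N. Then: (i) A avoids non-positivity under exchangeability (no element of posi(({f ∈ G(X^N) : f > 0} ∪ A) + W_{A_N}) is pointwise ≤ 0) if and only if the image Hy^N(A) ⊆ G(N^N_X) avoids non-positivity (no element of posi(Hy^N(A)) is pointwise ≤ 0); and (ii) Hy^N(E_ex(A)) = E(Hy^N(A)), where E_ex(A) is the intersection of all coherent and exchangeable sets of gambles on X^N including A, and E(B) denotes the natural extension of B ⊆ G(N^N_X), the intersection of all coherent sets of gambles on N^N_X including B. -/

import Mathlib

variable {X : Type*} [Fintype X] [DecidableEq X] [Nonempty X]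

/-- `ex^N(f)`: the uniform average of all permuted versions `π^t f` of `f`,
where `(π^t f)(x) = f(x ∘ π)`. -/
noncomputable def exg {X : Type*} (N : ℕ) (f : (Fin N → X) → ℝ) : (Fin N → X) → ℝ :=
  fun x => (∑ π : Equiv.Perm (Fin N), f (x ∘ π)) / (N.factorial : ℝ)

/-- `W_{A_N}`: the linear span of the gambles `f - π^t f`, which is the kernel of
the projection operator `ex^N`. -/
def WA (X : Type*) (N : ℕ) : Set ((Fin N → X) → ℝ) := {f | exg N f = 0}

/-- A coherent set of desirable gambles on a set of possibilities `Y`. -/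
def Coherent {Y : Type*} (D : Set (Y → ℝ)) : Prop :=
  (0 : Y → ℝ) ∉ D ∧ (∀ f : Y → ℝ, 0 ≤ f → f ≠ 0 → f ∈ D) ∧
  (∀ f ∈ D, ∀ c : ℝ, 0 < c → c • f ∈ D) ∧ ∀ f ∈ D, ∀ g ∈ D, f + g ∈ D

/-- A set of desirable gambles on `X^N` is exchangeable if `W_{A_N} + D ⊆ D`. -/
def Exchangeable (X : Type*) (N : ℕ) (D : Set ((Fin N → X) → ℝ)) : Prop :=
  ∀ f ∈ WA X N, ∀ g ∈ D, f + g ∈ D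

/-- The counting map: `countVec x z` is the number of indices `k` with `x k = z`. -/
def countVec {X : Type*} [Fintype X] [DecidableEq X] {n : ℕ} (x : Fin n → X) : X → ℕ :=
  fun z => (Finset.univ.filter fun k => x k = z).card

lemma sum_countVec {X : Type*} [Fintype X] [DecidableEq X] {n : ℕ} (x : Fin n → X) :
    ∑ z, countVec x z = n := by
  classical
  have h := Finset.card_eq_sum_card_fiberwise
    (s := (Finset.univ : Finset (Fin n))) (t := (Finset.univ : Finset X))
    (f := x) (fun a _ => Finset.mem_univ _)
  simpa [countVec, Finset.card_fin] using h.symm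

/-- `N^N_X`: the set of count vectors, i.e. maps `m : X → ℕ` with `∑ m = N`. -/
abbrev CV (X : Type*) [Fintype X] (N : ℕ) := {m : X → ℕ // ∑ z, m z = N}

/-- The counting map `T^N : X^N → N^N_X`. -/
def Tmap {X : Type*} [Fintype X] [DecidableEq X] {N : ℕ} (x : Fin N → X) : CV X N :=
  ⟨countVec x, sum_countVec x⟩

/-- `Hy^N(f)`: the count gamble `m ↦ (1/|[m]|) ∑_{y ∈ [m]} f(y)`, where
`[m]` is the set of sequences with count vector `m`. -/
noncomputable def hy {X : Type*} [Fintype X] [DecidableEq X] {N : ℕ}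
    (f : (Fin N → X) → ℝ) : CV X N → ℝ :=
  fun m => (∑ y ∈ Finset.univ.filter (fun x : Fin N → X => Tmap x = m), f y) /
    ((Finset.univ.filter (fun x : Fin N → X => Tmap x = m)).card : ℝ)

/-- The positive hull of a set of gambles: all finite strictly positive linear combinations. -/
def posi {Y : Type*} (A : Set (Y → ℝ)) : Set (Y → ℝ) :=
  {g | ∃ n : ℕ, 0 < n ∧ ∃ (c : Fin n → ℝ) (f : Fin n → Y → ℝ),
    (∀ k, 0 < c k) ∧ (∀ k, f k ∈ A) ∧ g = ∑ k, c k • f k}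

open Pointwise

/-- `A` avoids non-positivity under exchangeability: no element of
`posi(({f > 0} ∪ A) + W_{A_N})` is pointwise `≤ 0`. -/
def ANPE (X : Type*) (N : ℕ) (A : Set ((Fin N → X) → ℝ)) : Prop :=
  ∀ g ∈ posi (({f : (Fin N → X) → ℝ | 0 ≤ f ∧ f ≠ 0} ∪ A) + WA X N), ¬ g ≤ 0

/-- The exchangeable natural extension of `A`: the intersection of all coherent and
exchangeable sets of desirable gambles including `A` (the whole space if there are none). -/
def exnatex (X : Type*) [Fintype X] [DecidableEq X] (N : ℕ)
    (A : Set ((Fin N → X) → ℝ)) : Set ((Fin N → X) → ℝ) :=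
  ⋂₀ {D | Coherent D ∧ Exchangeable X N D ∧ A ⊆ D}


set_option linter.unusedSectionVars false
set_option maxHeartbeats 1000000

section helpers
variable {N : ℕ}

lemma my_countVec_comp_perm (x : Fin N → X) (π : Equiv.Perm (Fin N)) :
    countVec (x ∘ π) = countVec x := by
  funext z
  have := Fintype.card_congr
    (π.subtypeEquiv (p := fun k => (x ∘ π) k = z) (q := fun k => x k = z)
      (fun a => Iff.rfl))
  simpa [Fintype.card_subtype, countVec] using this

lemma my_Tmap_comp_perm (x : Fin N → X) (π : Equiv.Perm (Fin N)) :
    Tmap (x ∘ π) = Tmap x := Subtype.ext (my_countVec_comp_perm x π)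

def my_fibEquiv {β : X → Type*} (z : X) : {s : Σ w, β w // s.1 = z} ≃ β z where
  toFun s := cast (congrArg β s.2) s.1.2
  invFun b := ⟨⟨z, b⟩, rfl⟩
  left_inv := by rintro ⟨⟨w, b⟩, rfl⟩; rfl
  right_inv := by intro b; rfl

lemma my_Tmap_surjective : Function.Surjective (Tmap (X := X) (N := N)) := by
  rintro ⟨mv, hm⟩
  have hcard : Fintype.card (Σ z : X, Fin (mv z)) = N := by
    simp [Fintype.card_sigma, hm]
  let e := Fintype.equivFinOfCardEq hcard
  refine ⟨fun k => (e.symm k).1, ?_⟩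
  apply Subtype.ext; funext z
  have h1 : countVec (fun k => (e.symm k).1) z
      = Fintype.card {k : Fin N // (e.symm k).1 = z} := by
    rw [Fintype.card_subtype]; rfl
  have h2 : Fintype.card {k : Fin N // (e.symm k).1 = z}
      = Fintype.card {s : Σ w : X, Fin (mv w) // s.1 = z} :=
    Fintype.card_congr (e.symm.subtypeEquiv (fun a => Iff.rfl))
  have h3 : Fintype.card {s : Σ w : X, Fin (mv w) // s.1 = z} = mv z := by
    rw [Fintype.card_congr (my_fibEquiv z), Fintype.card_fin]
  show countVec (fun k => (e.symm k).1) z = mv z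
  rw [h1, h2, h3]

lemma my_exists_comp_perm {x y : Fin N → X} (h : Tmap x = Tmap y) :
    ∃ π : Equiv.Perm (Fin N), x ∘ π = y := by
  have hc : ∀ z, Fintype.card {k // y k = z} = Fintype.card {k // x k = z} := by
    intro z
    rw [Fintype.card_subtype, Fintype.card_subtype]
    have hcv : countVec x = countVec y := congrArg Subtype.val h
    have := congrFun hcv z
    simpa [countVec] using this.symm
  let e : ∀ z, {k // y k = z} ≃ {k // x k = z} := fun z => Fintype.equivOfCardEq (hc z)
  refine ⟨((Equiv.sigmaFiberEquiv y).symm.trans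
      (Equiv.sigmaCongrRight e)).trans (Equiv.sigmaFiberEquiv x), ?_⟩
  funext k
  simp only [Function.comp_apply, Equiv.trans_apply, Equiv.sigmaFiberEquiv,
    Equiv.sigmaCongrRight, Equiv.coe_fn_mk, Equiv.coe_fn_symm_mk]
  exact (e (y k) ⟨k, rfl⟩).2

lemma my_card_fib_pos (m : CV X N) :
    0 < (Finset.univ.filter (fun x : Fin N → X => Tmap x = m)).card := by
  obtain ⟨x, rfl⟩ := my_Tmap_surjective m
  exact Finset.card_pos.2 ⟨x, by simp⟩

lemma my_hy_comp_Tmap (h : CV X N → ℝ) : hy (fun x => h (Tmap x)) = h := by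
  funext m
  have hcard := my_card_fib_pos m
  show (∑ y ∈ Finset.univ.filter (fun x : Fin N → X => Tmap x = m), h (Tmap y)) / _ = h m
  rw [Finset.sum_congr rfl (fun y hy => by rw [(Finset.mem_filter.1 hy).2]),
    Finset.sum_const, nsmul_eq_mul]
  exact mul_div_cancel_left₀ _ (Nat.cast_ne_zero.2 hcard.ne')

lemma my_exg_apply (f : (Fin N → X) → ℝ) (x : Fin N → X) :
    exg N f x = hy f (Tmap x) := by
  classical
  set F := Finset.univ.filter (fun y : Fin N → X => Tmap y = Tmap x) with hF
  have himg : (Finset.univ : Finset (Equiv.Perm (Fin N))).image (fun π : Equiv.Perm (Fin N) => x ∘ ⇑π) = F := by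
    ext y
    simp only [Finset.mem_image, Finset.mem_filter, Finset.mem_univ, true_and, hF]
    constructor
    · rintro ⟨π, -, rfl⟩; exact my_Tmap_comp_perm x π
    · intro h
      obtain ⟨π, hπ⟩ := my_exists_comp_perm h.symm
      exact ⟨π, hπ⟩
  set c := (Finset.univ.filter (fun π : Equiv.Perm (Fin N) => x ∘ π = x)).card with hc
  have hfibcard : ∀ y ∈ F,
      (Finset.univ.filter (fun π : Equiv.Perm (Fin N) => x ∘ π = y)).card = c := by
    intro y hyF
    obtain ⟨σ, hσ⟩ := my_exists_comp_perm ((Finset.mem_filter.1 hyF).2).symm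
    rw [hc]
    apply Finset.card_nbij' (fun τ => τ * σ⁻¹) (fun π => π * σ)
    · intro τ hτ
      have hτ' : x ∘ τ = y := (Finset.mem_filter.1 hτ).2
      simp only [Finset.mem_coe, Finset.mem_filter, Finset.mem_univ, true_and]
      funext k
      have : x (τ (σ⁻¹ k)) = y (σ⁻¹ k) := congrFun hτ' _
      have h2 : y (σ⁻¹ k) = x (σ (σ⁻¹ k)) := (congrFun hσ _).symm
      simp only [Equiv.Perm.mul_apply, Function.comp_apply]
      rw [this, h2, (show σ (σ⁻¹ k) = k from σ.apply_symm_apply k)]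
    · intro π hπ
      have hπ' : x ∘ π = x := (Finset.mem_filter.1 hπ).2
      simp only [Finset.mem_coe, Finset.mem_filter, Finset.mem_univ, true_and]
      funext k
      have : x (π (σ k)) = x (σ k) := congrFun hπ' _
      simp only [Equiv.Perm.mul_apply, Function.comp_apply]
      rw [this]
      exact congrFun hσ k
    · intro τ _; simp [mul_assoc]
    · intro π _; simp [mul_assoc]
  have hsum : ∑ π : Equiv.Perm (Fin N), f (x ∘ π) = (c : ℝ) * ∑ y ∈ F, f y := by
    rw [Finset.sum_comp f (fun π : Equiv.Perm (Fin N) => x ∘ ⇑π), himg, Finset.mul_sum]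
    exact Finset.sum_congr rfl (fun y hyF => by rw [hfibcard y hyF, nsmul_eq_mul])
  have hfact : N.factorial = F.card * c := by
    have hcov : ∀ π ∈ (Finset.univ : Finset (Equiv.Perm (Fin N))), x ∘ π ∈ F := by
      intro π _
      rw [← himg]
      exact Finset.mem_image.2 ⟨π, Finset.mem_univ _, rfl⟩
    have := Finset.card_eq_sum_card_fiberwise hcov
    rw [Finset.card_univ, Fintype.card_perm, Fintype.card_fin] at this
    rw [this, Finset.sum_congr rfl hfibcard, Finset.sum_const, smul_eq_mul]
  have hcpos : 0 < c := Finset.card_pos.2 ⟨1, by simp⟩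
  have hFpos : 0 < F.card := my_card_fib_pos (Tmap x)
  show (∑ π : Equiv.Perm (Fin N), f (x ∘ π)) / (N.factorial : ℝ)
      = (∑ y ∈ F, f y) / (F.card : ℝ)
  rw [hsum, hfact]
  push_cast
  rw [mul_comm (F.card : ℝ) (c : ℝ),
    mul_div_mul_left _ _ (by exact_mod_cast hcpos.ne')]

end helpers

section more
variable {N : ℕ}

lemma my_exg_eq (f : (Fin N → X) → ℝ) : exg N f = fun x => hy f (Tmap x) :=
  funext (my_exg_apply f)

lemma my_exg_symm (h : CV X N → ℝ) : exg N (fun x => h (Tmap x)) = fun x => h (Tmap x) := by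
  rw [my_exg_eq, my_hy_comp_Tmap]

lemma my_exg_add (f g : (Fin N → X) → ℝ) : exg N (f + g) = exg N f + exg N g := by
  funext x
  simp [exg, Finset.sum_add_distrib, add_div]

lemma my_exg_sub (f g : (Fin N → X) → ℝ) : exg N (f - g) = exg N f - exg N g := by
  funext x
  simp [exg, Finset.sum_sub_distrib, sub_div]

lemma my_exg_smul (c : ℝ) (f : (Fin N → X) → ℝ) : exg N (c • f) = c • exg N f := by
  funext x
  simp only [exg, Pi.smul_apply, smul_eq_mul, ← Finset.mul_sum, mul_div_assoc]

lemma my_exg_idem (f : (Fin N → X) → ℝ) : exg N (exg N f) = exg N f := by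
  rw [my_exg_eq f, my_exg_symm]

lemma my_WA_zero : (0 : (Fin N → X) → ℝ) ∈ WA X N := by
  show exg N 0 = 0
  funext x; simp [exg]

lemma my_WA_add {f g : (Fin N → X) → ℝ} (hf : f ∈ WA X N) (hg : g ∈ WA X N) :
    f + g ∈ WA X N := by
  show exg N (f + g) = 0
  rw [my_exg_add, hf, hg, add_zero]

lemma my_WA_smul {f : (Fin N → X) → ℝ} (c : ℝ) (hf : f ∈ WA X N) :
    c • f ∈ WA X N := by
  show exg N (c • f) = 0
  rw [my_exg_smul, hf, smul_zero]

lemma my_WA_exg_sub (f : (Fin N → X) → ℝ) : exg N f - f ∈ WA X N := by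
  show exg N (exg N f - f) = 0
  rw [my_exg_sub, my_exg_idem, sub_self]

lemma my_hy_WA {f : (Fin N → X) → ℝ} (hf : f ∈ WA X N) : hy f = 0 := by
  funext m
  obtain ⟨x, rfl⟩ := my_Tmap_surjective m
  have : exg N f x = 0 := by rw [hf]; rfl
  rw [← my_exg_apply, this]; rfl

lemma my_hy_add (f g : (Fin N → X) → ℝ) : hy (f + g) = hy f + hy g := by
  funext m
  simp [hy, Finset.sum_add_distrib, add_div]

lemma my_hy_smul (c : ℝ) (f : (Fin N → X) → ℝ) : hy (c • f) = c • hy f := by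
  funext m
  simp only [hy, Pi.smul_apply, smul_eq_mul, ← Finset.mul_sum, mul_div_assoc]

lemma my_hy_zero : hy (0 : (Fin N → X) → ℝ) = 0 := by
  funext m; simp [hy]

lemma my_hy_sum {ι : Type*} (s : Finset ι) (F : ι → (Fin N → X) → ℝ) :
    hy (∑ k ∈ s, F k) = ∑ k ∈ s, hy (F k) := by
  induction s using Finset.cons_induction with
  | empty => simpa using my_hy_zero
  | cons a s ha ih => rw [Finset.sum_cons, Finset.sum_cons, my_hy_add, ih]

lemma my_hy_nonneg {f : (Fin N → X) → ℝ} (hf : 0 ≤ f) : 0 ≤ hy f := by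
  intro m
  exact div_nonneg (Finset.sum_nonneg fun y _ => hf y) (Nat.cast_nonneg _)

lemma my_hy_nonpos {f : (Fin N → X) → ℝ} (hf : f ≤ 0) : hy f ≤ 0 := by
  intro m
  exact div_nonpos_of_nonpos_of_nonneg (Finset.sum_nonpos fun y _ => hf y)
    (Nat.cast_nonneg _)

lemma my_hy_pos_at {f : (Fin N → X) → ℝ} (hf : 0 ≤ f) {x : Fin N → X}
    (hx : 0 < f x) : 0 < hy f (Tmap x) := by
  have hcard := my_card_fib_pos (Tmap x)
  apply div_pos _ (by exact_mod_cast hcard)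
  have hxmem : x ∈ Finset.univ.filter (fun y : Fin N → X => Tmap y = Tmap x) := by simp
  calc (0:ℝ) < f x := hx
    _ ≤ _ := Finset.single_le_sum (fun y _ => hf y) hxmem

lemma my_pos_exists {Y : Type*} {f : Y → ℝ} (h0 : 0 ≤ f) (hne : f ≠ 0) :
    ∃ y, 0 < f y := by
  by_contra h
  push_neg at h
  exact hne (le_antisymm h h0)

lemma my_hy_pos_mem {f : (Fin N → X) → ℝ} (hf : 0 ≤ f) (hne : f ≠ 0) :
    0 ≤ hy f ∧ hy f ≠ 0 := by
  refine ⟨my_hy_nonneg hf, ?_⟩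
  obtain ⟨x, hx⟩ := my_pos_exists hf hne
  intro h
  have := my_hy_pos_at hf hx
  rw [h] at this
  exact lt_irrefl _ this

end more

section posiLemmas
variable {Y : Type*}

lemma my_mem_posi {S : Set (Y → ℝ)} {a : Y → ℝ} (ha : a ∈ S) : a ∈ posi S :=
  ⟨1, one_pos, fun _ => 1, fun _ => a, fun _ => one_pos, fun _ => ha, by simp⟩

lemma my_mem_posi_smul {S : Set (Y → ℝ)} {c : ℝ} (hc : 0 < c) {a : Y → ℝ} (ha : a ∈ S) :
    c • a ∈ posi S :=
  ⟨1, one_pos, fun _ => c, fun _ => a, fun _ => hc, fun _ => ha, by simp⟩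

lemma my_posi_add {S : Set (Y → ℝ)} {g1 g2 : Y → ℝ} (h1 : g1 ∈ posi S) (h2 : g2 ∈ posi S) :
    g1 + g2 ∈ posi S := by
  obtain ⟨n, hn, c, f, hc, hf, rfl⟩ := h1
  obtain ⟨m, hm, d, e, hd, he, rfl⟩ := h2
  refine ⟨n + m, by omega, Fin.append c d, Fin.append f e, ?_, ?_, ?_⟩
  · intro k
    refine Fin.addCases (fun i => ?_) (fun j => ?_) k
    · simpa [Fin.append_left] using hc i
    · simpa [Fin.append_right] using hd j
  · intro k
    refine Fin.addCases (fun i => ?_) (fun j => ?_) k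
    · simpa [Fin.append_left] using hf i
    · simpa [Fin.append_right] using he j
  · rw [Fin.sum_univ_add]
    congr 1
    · exact Finset.sum_congr rfl (fun i _ => by rw [Fin.append_left, Fin.append_left])
    · exact Finset.sum_congr rfl (fun j _ => by rw [Fin.append_right, Fin.append_right])

lemma my_posi_smul {S : Set (Y → ℝ)} {g : Y → ℝ} {c : ℝ} (hc : 0 < c) (hg : g ∈ posi S) :
    c • g ∈ posi S := by
  obtain ⟨n, hn, d, f, hd, hf, rfl⟩ := hg
  refine ⟨n, hn, fun k => c * d k, f, fun k => mul_pos hc (hd k), hf, ?_⟩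
  rw [Finset.smul_sum]
  exact Finset.sum_congr rfl (fun k _ => by rw [smul_smul])

lemma my_posi_subset {S D : Set (Y → ℝ)} (hD : Coherent D) (hS : S ⊆ D) : posi S ⊆ D := by
  rintro g ⟨n, hn, c, f, hc, hf, rfl⟩
  have : Nonempty (Fin n) := ⟨⟨0, hn⟩⟩
  exact Finset.sum_induction_nonempty _ (· ∈ D)
    (fun a b ha hb => hD.2.2.2 a ha b hb) Finset.univ_nonempty
    (fun k _ => hD.2.2.1 (f k) (hS (hf k)) (c k) (hc k))

lemma my_sum_mem_posi {S : Set (Y → ℝ)} {ι : Type*} {s : Finset ι} (hs : s.Nonempty)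
    {c : ι → ℝ} {f : ι → Y → ℝ} (hc : ∀ k ∈ s, 0 < c k) (hf : ∀ k ∈ s, f k ∈ S) :
    ∑ k ∈ s, c k • f k ∈ posi S := by
  classical
  induction hs using Finset.Nonempty.cons_induction with
  | singleton a => simpa using my_mem_posi_smul (hc a (by simp)) (hf a (by simp))
  | cons a s ha hs ih =>
    rw [Finset.sum_cons]
    exact my_posi_add
      (my_mem_posi_smul (hc a (Finset.mem_cons_self a s)) (hf a (Finset.mem_cons_self a s)))
      (ih (fun k hk => hc k (Finset.mem_cons_of_mem hk))
        (fun k hk => hf k (Finset.mem_cons_of_mem hk)))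

lemma my_posi_union_pos {B : Set (Y → ℝ)} (hB : ∀ g ∈ posi B, ¬ g ≤ 0) :
    ∀ g ∈ posi ({f : Y → ℝ | 0 ≤ f ∧ f ≠ 0} ∪ B), ¬ g ≤ 0 := by
  classical
  rintro g ⟨n, hn, c, f, hc, hf, rfl⟩ hle
  by_cases hS : ∃ k, f k ∈ B
  · set s := Finset.univ.filter (fun k : Fin n => f k ∈ B) with hs
    have hsne : s.Nonempty := by
      obtain ⟨k, hk⟩ := hS
      exact ⟨k, by simp [hs, hk]⟩
    have hg1 : (∑ k ∈ s, c k • f k) ∈ posi B :=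
      my_sum_mem_posi hsne (fun k _ => hc k) (fun k hk => (Finset.mem_filter.1 hk).2)
    refine hB _ hg1 (fun y => ?_)
    have hsplit := Finset.sum_filter_add_sum_filter_not Finset.univ
      (fun k : Fin n => f k ∈ B) (fun k => c k • f k)
    have hval : (∑ k ∈ s, c k • f k) y
        + (∑ k ∈ Finset.univ.filter (fun k : Fin n => ¬ f k ∈ B), c k • f k) y
        = (∑ k : Fin n, c k • f k) y := by
      rw [← hsplit]; rfl
    have h2 : 0 ≤ (∑ k ∈ Finset.univ.filter (fun k : Fin n => ¬ f k ∈ B), c k • f k) y := by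
      rw [Finset.sum_apply]
      refine Finset.sum_nonneg (fun k hk => ?_)
      have hkB : f k ∉ B := (Finset.mem_filter.1 hk).2
      have hkpos : 0 ≤ f k := ((hf k).resolve_right hkB).1
      simpa using mul_nonneg (hc k).le (hkpos y)
    have := hle y
    simp only [Pi.zero_apply] at this ⊢
    linarith
  · push_neg at hS
    have hpos : ∀ k, 0 ≤ f k ∧ f k ≠ 0 := fun k => (hf k).resolve_right (hS k)
    obtain ⟨y, hy⟩ := my_pos_exists (hpos ⟨0, hn⟩).1 (hpos ⟨0, hn⟩).2
    have hlt : 0 < (∑ k : Fin n, c k • f k) y := by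
      rw [Finset.sum_apply]
      have hsle := Finset.single_le_sum (f := fun k => (c k • f k) y)
        (fun k _ => by simpa using mul_nonneg (hc k).le ((hpos k).1 y))
        (Finset.mem_univ ⟨0, hn⟩)
      have : (0:ℝ) < (c ⟨0, hn⟩ • f ⟨0, hn⟩) y := by
        simpa using mul_pos (hc ⟨0, hn⟩) hy
      linarith
    exact absurd (hle y) (not_le.2 hlt)

end posiLemmas


section mainHelpers
variable {N : ℕ}

lemma my_coherent_no_nonpos {Y : Type*} {D : Set (Y → ℝ)} (hD : Coherent D) {g : Y → ℝ}
    (hg : g ∈ D) (hle : g ≤ 0) : False := by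
  by_cases h : g = 0
  · exact hD.1 (h ▸ hg)
  · have hneg : (0 : Y → ℝ) ≤ -g := by intro y; simpa using hle y
    have hne : -g ≠ 0 := fun h' => h (neg_eq_zero.1 h')
    have := hD.2.2.2 g hg (-g) (hD.2.1 (-g) hneg hne)
    rw [add_neg_cancel] at this
    exact hD.1 this

lemma my_hyU {A : Set ((Fin N → X) → ℝ)} :
    ∀ u ∈ ({f : (Fin N → X) → ℝ | 0 ≤ f ∧ f ≠ 0} ∪ A) + WA X N,
      hy u ∈ {f : CV X N → ℝ | 0 ≤ f ∧ f ≠ 0} ∪ (hy '' A) := by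
  intro u hu
  obtain ⟨p, hp, w, hw, rfl⟩ := Set.mem_add.1 hu
  rw [my_hy_add, my_hy_WA hw, add_zero]
  rcases hp with hp | hp
  · exact Or.inl (my_hy_pos_mem hp.1 hp.2)
  · exact Or.inr ⟨p, hp, rfl⟩

lemma my_SS_subset {A D : Set ((Fin N → X) → ℝ)} (hD : Coherent D)
    (hE : Exchangeable X N D) (hA : A ⊆ D) :
    ({f : (Fin N → X) → ℝ | 0 ≤ f ∧ f ≠ 0} ∪ A) + WA X N ⊆ D := by
  rintro u hu
  obtain ⟨p, hp, w, hw, rfl⟩ := Set.mem_add.1 hu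
  have hpD : p ∈ D := hp.elim (fun h => hD.2.1 p h.1 h.2) (fun h => hA h)
  have := hE w hw p hpD
  rwa [add_comm] at this

lemma my_D0_exch (A : Set ((Fin N → X) → ℝ)) :
    Exchangeable X N (posi (({f : (Fin N → X) → ℝ | 0 ≤ f ∧ f ≠ 0} ∪ A) + WA X N)) := by
  intro w hw g hg
  obtain ⟨n, hn, c, u, hc, hu, rfl⟩ := hg
  classical
  set k0 : Fin n := ⟨0, hn⟩ with hk0
  set u' : Fin n → (Fin N → X) → ℝ :=
    fun k => if k = k0 then u k + (c k0)⁻¹ • w else u k with hu'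
  have hmem : ∀ k, u' k ∈ ({f : (Fin N → X) → ℝ | 0 ≤ f ∧ f ≠ 0} ∪ A) + WA X N := by
    intro k
    by_cases h : k = k0
    · obtain ⟨p, hp, ω, hω, hpe⟩ := Set.mem_add.1 (hu k)
      refine Set.mem_add.2 ⟨p, hp, ω + (c k0)⁻¹ • w,
        my_WA_add hω (my_WA_smul _ hw), ?_⟩
      simp only [hu', if_pos h]
      rw [← hpe]; abel
    · simpa only [hu', if_neg h] using hu k
  refine ⟨n, hn, c, u', hc, hmem, ?_⟩
  have hterm : ∀ k, c k • u' k = c k • u k + (if k = k0 then w else 0) := by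
    intro k
    by_cases h : k = k0
    · rw [h]
      simp only [hu', if_pos rfl, smul_add, smul_inv_smul₀ (hc k0).ne']
      simp
    · simp [hu', h]
  rw [Finset.sum_congr rfl (fun k _ => hterm k), Finset.sum_add_distrib,
    Finset.sum_ite_eq' Finset.univ k0 (fun _ => w)]
  simp only [Finset.mem_univ, if_pos]
  abel

end mainHelpers

theorem exchangeable_natural_extension_and_representation {N : ℕ} (hN : 1 ≤ N)
    (A : Set ((Fin N → X) → ℝ)) :
    (ANPE X N A ↔ ∀ g ∈ posi (hy '' A), ¬ g ≤ 0) ∧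
    hy '' exnatex X N A =
      ⋂₀ {Dc : Set (CV X N → ℝ) | Coherent Dc ∧ hy '' A ⊆ Dc} := by
  classical
  have forward : ANPE X N A → ∀ g ∈ posi (hy '' A), ¬ g ≤ 0 := by
    intro hA g hg hle
    obtain ⟨n, hn, c, v, hc, hv, rfl⟩ := hg
    choose a haA hav using hv
    refine hA (∑ k : Fin n, c k • exg N (a k))
      ⟨n, hn, c, fun k => exg N (a k), hc, fun k => ?_, rfl⟩ ?_
    · exact Set.mem_add.2 ⟨a k, Or.inr (haA k), exg N (a k) - a k, my_WA_exg_sub (a k),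
        by abel⟩
    · intro x
      have hx : (∑ k : Fin n, c k • exg N (a k)) x = (∑ k : Fin n, c k • v k) (Tmap x) := by
        rw [Finset.sum_apply, Finset.sum_apply]
        refine Finset.sum_congr rfl (fun k _ => ?_)
        simp only [Pi.smul_apply, smul_eq_mul]
        rw [my_exg_apply, hav]
      have := hle (Tmap x)
      simpa [hx] using this
  have backward : (∀ g ∈ posi (hy '' A), ¬ g ≤ 0) → ANPE X N A := by
    intro hB g hg hle
    obtain ⟨n, hn, c, u, hc, hu, rfl⟩ := hg
    have h1 : hy (∑ k : Fin n, c k • u k)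
        ∈ posi ({f : CV X N → ℝ | 0 ≤ f ∧ f ≠ 0} ∪ hy '' A) := by
      refine ⟨n, hn, c, fun k => hy (u k), hc, fun k => my_hyU _ (hu k), ?_⟩
      rw [my_hy_sum]
      exact Finset.sum_congr rfl fun k _ => my_hy_smul _ _
    exact my_posi_union_pos hB _ h1 (my_hy_nonpos hle)
  refine ⟨⟨forward, backward⟩, ?_⟩
  by_cases hA : ANPE X N A
  · have hB := forward hA
    have hD0coh : Coherent (posi (({f : (Fin N → X) → ℝ | 0 ≤ f ∧ f ≠ 0} ∪ A) + WA X N)) := by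
      refine ⟨fun h0 => hA 0 h0 le_rfl, fun f hf hne => ?_,
        fun f hf c hc => my_posi_smul hc hf, fun f hf g hg => my_posi_add hf hg⟩
      exact my_mem_posi (Set.mem_add.2 ⟨f, Or.inl ⟨hf, hne⟩, 0, my_WA_zero, add_zero f⟩)
    have hAD0 : A ⊆ posi (({f : (Fin N → X) → ℝ | 0 ≤ f ∧ f ≠ 0} ∪ A) + WA X N) := fun a ha =>
      my_mem_posi (Set.mem_add.2 ⟨a, Or.inr ha, 0, my_WA_zero, add_zero a⟩)
    have hexeq : exnatex X N A
        = posi (({f : (Fin N → X) → ℝ | 0 ≤ f ∧ f ≠ 0} ∪ A) + WA X N) := by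
      unfold exnatex
      apply Set.Subset.antisymm
      · exact Set.sInter_subset_of_mem ⟨hD0coh, my_D0_exch A, hAD0⟩
      · exact Set.subset_sInter fun D hD =>
          my_posi_subset hD.1 (my_SS_subset hD.1 hD.2.1 hD.2.2)
    have hE0coh : Coherent (posi ({f : CV X N → ℝ | 0 ≤ f ∧ f ≠ 0} ∪ hy '' A)) := by
      refine ⟨fun h0 => my_posi_union_pos hB 0 h0 le_rfl,
        fun f hf hne => my_mem_posi (Or.inl ⟨hf, hne⟩),
        fun f hf c hc => my_posi_smul hc hf, fun f hf g hg => my_posi_add hf hg⟩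
    have hE : ⋂₀ {Dc : Set (CV X N → ℝ) | Coherent Dc ∧ hy '' A ⊆ Dc}
        = posi ({f : CV X N → ℝ | 0 ≤ f ∧ f ≠ 0} ∪ hy '' A) := by
      apply Set.Subset.antisymm
      · exact Set.sInter_subset_of_mem ⟨hE0coh, fun b hb => my_mem_posi (Or.inr hb)⟩
      · refine Set.subset_sInter fun Dc hDc => my_posi_subset hDc.1 ?_
        rintro f (hf | hf)
        · exact hDc.1.2.1 f hf.1 hf.2
        · exact hDc.2 hf
    rw [hexeq, hE]
    apply Set.Subset.antisymm
    · rintro _ ⟨g, ⟨n, hn, c, u, hc, hu, rfl⟩, rfl⟩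
      refine ⟨n, hn, c, fun k => hy (u k), hc, fun k => my_hyU _ (hu k), ?_⟩
      rw [my_hy_sum]
      exact Finset.sum_congr rfl fun k _ => my_hy_smul _ _
    · rintro g ⟨n, hn, c, v, hc, hv, rfl⟩
      have hlift : ∀ k, ∃ u,
          u ∈ ({f : (Fin N → X) → ℝ | 0 ≤ f ∧ f ≠ 0} ∪ A) + WA X N ∧ hy u = v k := by
        intro k
        rcases hv k with hvp | ⟨a, haA, hae⟩
        · refine ⟨fun x => v k (Tmap x),
            Set.mem_add.2 ⟨fun x => v k (Tmap x), Or.inl ⟨fun x => hvp.1 (Tmap x), ?_⟩, 0,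
              my_WA_zero, add_zero _⟩, my_hy_comp_Tmap _⟩
          intro h
          apply hvp.2
          funext m
          obtain ⟨x, rfl⟩ := my_Tmap_surjective m
          exact congrFun h x
        · exact ⟨a, Set.mem_add.2 ⟨a, Or.inr haA, 0, my_WA_zero, add_zero a⟩, hae⟩
      choose u huSS hue using hlift
      refine ⟨∑ k : Fin n, c k • u k, ⟨n, hn, c, u, hc, huSS, rfl⟩, ?_⟩
      rw [my_hy_sum]
      refine Finset.sum_congr rfl fun k _ => ?_
      rw [my_hy_smul, hue]
  · have hB' : ¬ (∀ g ∈ posi (hy '' A), ¬ g ≤ 0) := fun h => hA (backward h)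
    have h1 : {D : Set ((Fin N → X) → ℝ) | Coherent D ∧ Exchangeable X N D ∧ A ⊆ D} = ∅ := by
      rw [Set.eq_empty_iff_forall_notMem]
      rintro D ⟨hc, he, hs⟩
      apply hA
      intro g hg hle
      exact my_coherent_no_nonpos hc (my_posi_subset hc (my_SS_subset hc he hs) hg) hle
    have h2 : {Dc : Set (CV X N → ℝ) | Coherent Dc ∧ hy '' A ⊆ Dc} = ∅ := by
      rw [Set.eq_empty_iff_forall_notMem]
      rintro Dc ⟨hc, hs⟩
      apply hB'
      intro g hg hle
      exact my_coherent_no_nonpos hc (my_posi_subset hc hs hg) hle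
    unfold exnatex
    rw [h1, h2, Set.sInter_empty, Set.sInter_empty, Set.image_univ]
    exact Set.range_eq_univ.2 fun h => ⟨fun x => h (Tmap x), my_hy_comp_Tmap h⟩
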